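/- For any elements x, y of a Coxeter group W, the Demazure product x ∗ y equals the unique maximal element (in Bruhat order) of the set {uv : u ≤ x, v ≤ y}. -/

import Mathlib

open List

namespace DemAux

open CoxeterSystem

variable {B W : Type*} [Group W] {M : CoxeterMatrix B} (cs : CoxeterSystem M W)

local prefix:100 "σ" => cs.simple
local prefix:100 "π" => cs.wordProd
local prefix:100 "ℓ" => cs.length
local prefix:100 "ris" => cs.rightInvSeq
local prefix:100 "lis" => cs.leftInvSeq

open scoped Classical

private theorem dperm_inv_aux (i : B) (p : W × ZMod 2) :
    (σ i * (σ i * p.1 * σ i) * σ i,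
      (p.2 + if p.1 = σ i then 1 else 0) + if σ i * p.1 * σ i = σ i then (1 : ZMod 2) else 0)
      = p := by
  obtain ⟨t, e⟩ := p
  have h1 : σ i * (σ i * t * σ i) * σ i = t := by
    simp only [mul_assoc, cs.simple_mul_simple_cancel_left, cs.simple_mul_simple_self, mul_one]
  have h2 : (σ i * t * σ i = σ i) ↔ (t = σ i) := by
    constructor
    · intro h
      have := congrArg (fun x => σ i * x * σ i) h
      simp only [h1] at this
      rw [this, cs.simple_mul_simple_self, one_mul]
    · rintro rfl
      simp only [cs.simple_mul_simple_self, one_mul]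
  simp only [h1, h2]
  rcases eq_or_ne t (σ i) with h | h
  · have h3 : e + 1 + 1 = e := by
      rw [add_assoc]
      norm_num
      rfl
    simp [h, h3]
  · simp [h]

/-- The basic involution of `W × ZMod 2` attached to a simple reflection. -/
noncomputable def dperm (i : B) : Equiv.Perm (W × ZMod 2) where
  toFun p := (σ i * p.1 * σ i, p.2 + if p.1 = σ i then 1 else 0)
  invFun p := (σ i * p.1 * σ i, p.2 + if p.1 = σ i then 1 else 0)
  left_inv p := dperm_inv_aux cs i p
  right_inv p := dperm_inv_aux cs i p

theorem dperm_apply (i : B) (t : W) (e : ZMod 2) :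
    dperm cs i (t, e) = (σ i * t * σ i, e + if t = σ i then 1 else 0) := rfl

theorem conj_pow_simple (i j : B) (k : ℕ) :
    σ j * (σ i * σ j) ^ k = (σ j * σ i) ^ k * σ j := by
  induction k with
  | zero => simp
  | succ k ih =>
    rw [pow_succ, ← mul_assoc, ih, pow_succ]
    group


private theorem conj_eq_iff (g x y : W) : g * x * g⁻¹ = y ↔ x = g⁻¹ * y * g := by
  constructor
  · rintro rfl; group
  · rintro rfl; group

theorem dperm_pow_apply (i j : B) (k : ℕ) (t : W) (e : ZMod 2) :
    ((dperm cs i * dperm cs j) ^ k) (t, e) =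
      ((σ i * σ j) ^ k * t * (σ j * σ i) ^ k,
        e + ((List.range (2 * k)).countP
          fun r => decide ((σ j * σ i) ^ r * σ j = t) : ℕ)) := by
  induction k with
  | zero => simp
  | succ k ih =>
    have hinv : ∀ m : ℕ, ((σ i * σ j) ^ m)⁻¹ = (σ j * σ i) ^ m := by
      intro m
      rw [← inv_pow, mul_inv_rev, cs.inv_simple, cs.inv_simple]
    rw [pow_succ', Equiv.Perm.mul_apply, ih, Equiv.Perm.mul_apply, dperm_apply, dperm_apply]
    have hA : ((σ i * σ j) ^ k * t * (σ j * σ i) ^ k = σ j)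
        ↔ ((σ j * σ i) ^ (2 * k) * σ j = t) := by
      rw [← hinv k, conj_eq_iff, hinv, eq_comm]
      have e2 : (σ j * σ i) ^ k * σ j * (σ i * σ j) ^ k = (σ j * σ i) ^ (2 * k) * σ j := by
        calc (σ j * σ i) ^ k * σ j * (σ i * σ j) ^ k
            = (σ j * σ i) ^ k * (σ j * (σ i * σ j) ^ k) := by simp only [mul_assoc]
          _ = (σ j * σ i) ^ k * ((σ j * σ i) ^ k * σ j) := by rw [conj_pow_simple]
          _ = (σ j * σ i) ^ k * (σ j * σ i) ^ k * σ j := by simp only [mul_assoc]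
          _ = (σ j * σ i) ^ (2 * k) * σ j := by rw [← pow_add, two_mul]
      rw [← e2]
    have hB : (σ j * ((σ i * σ j) ^ k * t * (σ j * σ i) ^ k) * σ j = σ i)
        ↔ ((σ j * σ i) ^ (2 * k + 1) * σ j = t) := by
      have e1 : σ j * ((σ i * σ j) ^ k * t * (σ j * σ i) ^ k) * σ j = σ i
          ↔ (σ i * σ j) ^ k * t * (σ j * σ i) ^ k = σ j * σ i * σ j := by
        constructor
        · intro h
          have h' := congrArg (fun x => σ j * x * σ j) h
          rw [← h']
          simp only [mul_assoc, cs.simple_mul_simple_cancel_left,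
            cs.simple_mul_simple_self, mul_one]
        · intro h
          rw [h]
          simp only [mul_assoc, cs.simple_mul_simple_cancel_left,
            cs.simple_mul_simple_self, mul_one]
      rw [e1, ← hinv k, conj_eq_iff, hinv, eq_comm]
      have e2 : (σ j * σ i) ^ k * (σ j * σ i * σ j) * (σ i * σ j) ^ k
          = (σ j * σ i) ^ (2 * k + 1) * σ j := by
        calc (σ j * σ i) ^ k * (σ j * σ i * σ j) * (σ i * σ j) ^ k
            = (σ j * σ i) ^ k * (σ j * σ i) * (σ j * (σ i * σ j) ^ k) := by
              simp only [mul_assoc]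
          _ = (σ j * σ i) ^ k * (σ j * σ i) * ((σ j * σ i) ^ k * σ j) := by
              rw [conj_pow_simple]
          _ = (σ j * σ i) ^ (k + 1) * (σ j * σ i) ^ k * σ j := by
              rw [pow_succ]
              simp only [mul_assoc]
          _ = (σ j * σ i) ^ (2 * k + 1) * σ j := by
              rw [← pow_add, show k + 1 + k = 2 * k + 1 by ring]
      rw [← e2]
    rw [if_congr hA rfl rfl, if_congr hB rfl rfl]
    have hrange : 2 * (k + 1) = (2 * k) + 1 + 1 := by ring
    rw [hrange, List.range_succ, List.range_succ, List.countP_append, List.countP_append]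
    refine Prod.ext ?_ ?_
    · show σ i * (σ j * ((σ i * σ j) ^ k * t * (σ j * σ i) ^ k) * σ j) * σ i
        = (σ i * σ j) ^ (k + 1) * t * (σ j * σ i) ^ (k + 1)
      rw [pow_succ', pow_succ]
      group
    · show e + _ + _ + _ = e + _
      simp only [List.countP_cons, List.countP_nil, Nat.zero_add]
      rcases Classical.em ((σ j * σ i) ^ (2 * k) * σ j = t) with h1 | h1 <;>
        rcases Classical.em ((σ j * σ i) ^ (2 * k + 1) * σ j = t) with h2 | h2 <;>
        simp [h1, h2] <;> push_cast <;> ring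


theorem dperm_liftable : M.IsLiftable (fun i => dperm cs i) := by
  intro i j
  rcases Nat.eq_zero_or_pos (M i j) with h0 | hpos
  · rw [h0, pow_zero]
  · ext ⟨t, e⟩ : 1
    rw [dperm_pow_apply, Equiv.Perm.one_apply]
    refine Prod.ext ?_ ?_
    · show (σ i * σ j) ^ M i j * t * (σ j * σ i) ^ M i j = t
      rw [cs.simple_mul_simple_pow, cs.simple_mul_simple_pow', one_mul, mul_one]
    · show e + _ = e
      have hper : ∀ r : ℕ, (σ j * σ i) ^ (M i j + r) * σ j = (σ j * σ i) ^ r * σ j := by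
        intro r
        rw [pow_add, cs.simple_mul_simple_pow', one_mul]
      have : (List.range (2 * M i j)).countP
          (fun r => decide ((σ j * σ i) ^ r * σ j = t)) =
          2 * (List.range (M i j)).countP
          (fun r => decide ((σ j * σ i) ^ r * σ j = t)) := by
        rw [two_mul, List.range_add, List.countP_append, List.countP_map, two_mul]
        congr 1
        apply List.countP_congr
        intro r _
        simp only [Function.comp_apply, decide_eq_true_eq, hper r]
      rw [this]
      push_cast
      rw [show (2 : ZMod 2) = 0 by decide, zero_mul, add_zero]

/-- The parity homomorphism into permutations of `W × ZMod 2`. -/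
noncomputable def dmu : W →* Equiv.Perm (W × ZMod 2) :=
  cs.lift ⟨fun i => dperm cs i, dperm_liftable cs⟩

theorem dmu_simple (i : B) : dmu cs (σ i) = dperm cs i :=
  cs.lift_apply_simple (dperm_liftable cs) i

theorem ris_cons (i : B) (ω : List B) :
    ris (i :: ω) = ((π ω)⁻¹ * σ i * π ω) :: ris ω := rfl

theorem dmu_wordProd (ω : List B) (t : W) (e : ZMod 2) :
    dmu cs (π ω) (t, e) =
      (π ω * t * (π ω)⁻¹,
        e + ((ris ω).countP fun x => decide (x = t) : ℕ)) := by
  induction ω with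
  | nil => simp [dmu]
  | cons i ω ih =>
    rw [cs.wordProd_cons, map_mul, Equiv.Perm.mul_apply, ih, dmu_simple, dperm_apply,
      ris_cons, List.countP_cons]
    have hcond : (π ω * t * (π ω)⁻¹ = σ i) ↔ ((π ω)⁻¹ * σ i * π ω = t) := by
      rw [conj_eq_iff, eq_comm]
    refine Prod.ext ?_ ?_
    · show σ i * (π ω * t * (π ω)⁻¹) * σ i = (σ i * π ω) * t * (σ i * π ω)⁻¹
      rw [mul_inv_rev, cs.inv_simple]
      group
    · show e + _ + _ = e + _
      rw [if_congr hcond rfl rfl]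
      rcases Classical.em ((π ω)⁻¹ * σ i * π ω = t) with h | h
      · rw [if_pos h, if_pos (decide_eq_true h)]
        push_cast
        ring
      · rw [if_neg h, if_neg (by simpa using h)]
        push_cast
        ring

theorem countP_ris_invariant {ω₁ ω₂ : List B} (h : π ω₁ = π ω₂) (t : W) :
    (((ris ω₁).countP fun x => decide (x = t) : ℕ) : ZMod 2)
      = ((ris ω₂).countP fun x => decide (x = t) : ℕ) := by
  have h1 := dmu_wordProd cs ω₁ t 0
  have h2 := dmu_wordProd cs ω₂ t 0
  rw [h] at h1
  rw [h1] at h2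
  have := congrArg Prod.snd h2
  simpa using this

theorem countP_lis_eq (ω : List B) (t : W) :
    ((lis ω).countP fun x => decide (x = t)) = ((ris ω.reverse).countP fun x => decide (x = t)) := by
  have h1 : lis ω = (ris ω.reverse).reverse := by
    rw [cs.rightInvSeq_reverse]
    rw [List.reverse_reverse]
  rw [h1]
  exact ((List.reverse_perm _).countP_eq _)

theorem countP_lis_invariant {ω₁ ω₂ : List B} (h : π ω₁ = π ω₂) (t : W) :
    (((lis ω₁).countP fun x => decide (x = t) : ℕ) : ZMod 2)
      = ((lis ω₂).countP fun x => decide (x = t) : ℕ) := by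
  rw [countP_lis_eq, countP_lis_eq]
  apply countP_ris_invariant
  rw [cs.wordProd_reverse, cs.wordProd_reverse, h]


theorem lis_cons (i : B) (ω : List B) :
    lis (i :: ω) = σ i :: List.map (fun x => σ i * x * (σ i)⁻¹) (lis ω) := by
  show CoxeterSystem.leftInvSeq cs (i :: ω) = _
  rw [show CoxeterSystem.leftInvSeq cs (i :: ω)
      = σ i :: List.map (⇑(MulAut.conj (σ i))) (lis ω) from rfl]
  congr 1

theorem lis_append (α β : List B) :
    lis (α ++ β) = lis α ++ List.map (fun x => π α * x * (π α)⁻¹) (lis β) := by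
  induction α with
  | nil => simp
  | cons c α ih =>
    rw [List.cons_append, lis_cons, lis_cons, ih, List.map_append, List.map_map,
      cs.wordProd_cons]
    congr 2
    apply List.map_congr_left
    intro x _
    simp only [Function.comp_apply]
    group

theorem lis_eq_map_conj_ris (θ : List B) :
    lis θ = List.map (fun r => π θ * r * (π θ)⁻¹) (ris θ) := by
  induction θ with
  | nil => simp
  | cons c θ ih =>
    rw [lis_cons, ris_cons, cs.wordProd_cons, List.map_cons, ih, List.map_map]
    congr 1
    · group
    · apply List.map_congr_left
      intro x _
      simp only [Function.comp_apply]
      group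

/-- Strong exchange property (left version). -/
theorem strong_exchange (ω : List B) {t : W} (ht : cs.IsReflection t)
    (hlt : ℓ (t * π ω) < ℓ (π ω)) :
    ∃ j, ∃ hj : j < ω.length, t * π ω = π (ω.eraseIdx j) := by
  -- construct an alternative word for `π ω` with an odd count of `t` in its left inv seq
  obtain ⟨p, i, hpt⟩ := id ht
  obtain ⟨θ, hθ⟩ := cs.wordProd_surjective p
  obtain ⟨τ, hτred, hτ⟩ := cs.exists_reduced_word' (t * π ω)
  set δ : List B := θ ++ i :: θ.reverse with hδ
  have hπδ : π δ = t := by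
    rw [hδ, cs.wordProd_append, cs.wordProd_cons, cs.wordProd_reverse, hθ, hpt, ← mul_assoc]
  have hword : π (δ ++ τ) = π ω := by
    rw [cs.wordProd_append, hπδ, ← hτ, ← mul_assoc, ht.mul_self, one_mul]
  -- count in `lis τ` is zero
  have hτ0 : (lis τ).countP (fun x => decide (x = t)) = 0 := by
    rw [List.countP_eq_zero]
    intro a ha
    simp only [decide_eq_true_eq]
    rintro rfl
    have hinv := cs.isLeftInversion_of_mem_leftInvSeq hτred ha
    obtain ⟨-, hlen⟩ := hinv
    rw [← hτ, ← mul_assoc, ht.mul_self, one_mul] at hlen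
    omega
  -- counts: `lis θ` and parity trick
  have hconj : ∀ x : W, (p * x * p⁻¹ = t) ↔ (x = σ i) := by
    intro x
    rw [conj_eq_iff, hpt]
    constructor
    · intro h; rw [h]; group
    · intro h; rw [h]; group
  have hcount : ((lis (δ ++ τ)).countP (fun x => decide (x = t)) : ZMod 2) = 1 := by
    rw [lis_append, List.countP_append, lis_append, List.countP_append, lis_cons,
      List.map_cons, List.countP_cons, List.map_map, List.countP_map, List.countP_map]
    have hqθ : (π θ)⁻¹ * t * π θ = σ i := by
      rw [hθ, hpt]; group
    have e1 : List.countP (fun x => decide (x = t)) (lis θ)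
        = List.countP (fun x => decide (x = σ i)) (ris θ) := by
      rw [lis_eq_map_conj_ris, List.countP_map]
      apply List.countP_congr
      intro x _
      simp only [Function.comp_apply, decide_eq_true_eq]
      rw [conj_eq_iff, hqθ]
    have e2 : List.countP ((fun x => decide (x = t)) ∘ (fun x => π θ * x * (π θ)⁻¹)
          ∘ fun x => σ i * x * (σ i)⁻¹) (lis θ.reverse)
        = List.countP (fun x => decide (x = σ i)) (ris θ) := by
      rw [show List.countP (fun x => decide (x = σ i)) (ris θ)
          = List.countP (fun x => decide (x = σ i)) (lis θ.reverse) by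
        rw [countP_lis_eq, List.reverse_reverse]]
      apply List.countP_congr
      intro x _
      simp only [Function.comp_apply, decide_eq_true_eq]
      rw [conj_eq_iff, hqθ, conj_eq_iff, show (σ i)⁻¹ * σ i * σ i = σ i by group]
    have e3 : (π θ * σ i * (π θ)⁻¹ = t) := by
      rw [hθ]; exact hpt.symm
    have e4 : List.countP ((fun x => decide (x = t)) ∘ fun x => π δ * x * (π δ)⁻¹) (lis τ)
        = 0 := by
      rw [show ((fun x => decide (x = t)) ∘ fun x => π δ * x * (π δ)⁻¹)
          = fun x => decide (x = t) from ?_]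
      · exact hτ0
      · funext x
        rw [Function.comp_apply, decide_eq_decide, hπδ, conj_eq_iff,
          show t⁻¹ * t * t = t by group]
    rw [e1, e2, e4, if_pos (decide_eq_true e3)]
    rw [show ∀ c : ℕ, c + (c + 1) + 0 = 2 * c + 1 from fun c => by ring]
    push_cast
    rw [show (2 : ZMod 2) = 0 by decide, zero_mul, zero_add]
  have hinvar := countP_lis_invariant cs hword t
  rw [hcount] at hinvar
  have hne : (lis ω).countP (fun x => decide (x = t)) ≠ 0 := by
    intro h0
    rw [h0] at hinvar
    rw [Nat.cast_zero] at hinvar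
    exact absurd hinvar (by decide)
  have hmem : t ∈ lis ω := by
    have hpos : 0 < (lis ω).countP (fun x => decide (x = t)) := Nat.pos_of_ne_zero hne
    rw [List.countP_pos_iff] at hpos
    obtain ⟨a, ha, hat⟩ := hpos
    rw [decide_eq_true_eq] at hat
    rwa [hat] at ha
  obtain ⟨j, hj, hgetj⟩ := List.getElem_of_mem hmem
  rw [cs.length_leftInvSeq] at hj
  refine ⟨j, hj, ?_⟩
  have hkey := cs.getD_leftInvSeq_mul_wordProd ω j
  rw [List.getD_eq_getElem _ _ (by rwa [cs.length_leftInvSeq]), hgetj] at hkey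
  exact hkey


/-- One step of the Bruhat order: multiply by a reflection on the left, increasing length. -/
def cxStep (u v : W) : Prop := ∃ t : W, cs.IsReflection t ∧ v = t * u ∧ ℓ u < ℓ v

/-- The Bruhat order as reflexive-transitive closure of reflection steps. -/
def cxLE (u v : W) : Prop := Relation.ReflTransGen (cxStep cs) u v

theorem cxLE_length {u v : W} (h : cxLE cs u v) : ℓ u ≤ ℓ v := by
  induction h with
  | refl => exact le_rfl
  | tail _ hbc ih =>
    obtain ⟨t, _, _, hlt⟩ := hbc
    omega

theorem cxLE_antisymm {u v : W} (h : cxLE cs u v) (h' : cxLE cs v u) : u = v := by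
  rcases h.cases_tail with heq | ⟨c, huc, hcv⟩
  · exact heq.symm
  · exfalso
    obtain ⟨t, _, _, hlt⟩ := hcv
    have h1 := cxLE_length cs huc
    have h2 := cxLE_length cs h'
    omega

theorem single_lift {u v : W} (i : B) (hs : cxStep cs u v) (hd : ℓ (σ i * v) < ℓ v) :
    cxLE cs (σ i * u) v := by
  obtain ⟨t, ht, hv, hlen⟩ := hs
  obtain ⟨τ, hτred, hτ⟩ := cs.exists_reduced_word' (σ i * v)
  have hvτ : v = π (i :: τ) := by
    rw [cs.wordProd_cons, ← hτ, cs.simple_mul_simple_cancel_left]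
  have hlv : ℓ (σ i * v) + 1 = ℓ v := by
    rcases cs.length_simple_mul v i with h | h
    · omega
    · exact h
  have hred : cs.IsReduced (i :: τ) := by
    rw [CoxeterSystem.IsReduced, ← hvτ, List.length_cons, ← hτred, ← hτ]
    omega
  have hu : t * v = u := by rw [hv, ← mul_assoc, ht.mul_self, one_mul]
  obtain ⟨j, hj, hex⟩ := strong_exchange cs (i :: τ) ht
    (by rw [← hvτ, hu]; exact hlen)
  rw [← hvτ, hu] at hex
  cases j with
  | zero =>
    have huv : σ i * u = v := by
      rw [hex, List.eraseIdx_cons_zero, ← hτ, cs.simple_mul_simple_cancel_left]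
    rw [huv]
    exact Relation.ReflTransGen.refl
  | succ j' =>
    rw [List.eraseIdx_cons_succ, cs.wordProd_cons] at hex
    have hsu : σ i * u = π (τ.eraseIdx j') := by
      rw [hex, cs.simple_mul_simple_cancel_left]
    have hj' : j' < τ.length := by
      simpa using hj
    -- step from π (τ.eraseIdx j') up to π τ
    have h1 : π τ * ((ris τ).getD j' 1) = π (τ.eraseIdx j') :=
      cs.wordProd_mul_getD_rightInvSeq τ j'
    have hrmem : (ris τ).getD j' 1 ∈ ris τ := by
      rw [List.getD_eq_getElem _ _ (by rwa [cs.length_rightInvSeq])]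
      exact List.getElem_mem _
    have hrrefl : cs.IsReflection ((ris τ).getD j' 1) :=
      cs.isReflection_of_mem_rightInvSeq τ hrmem
    have h2 : π τ = π (τ.eraseIdx j') * ((ris τ).getD j' 1) := by
      rw [← h1, mul_assoc, hrrefl.mul_self, mul_one]
    have hlen1 : ℓ (π (τ.eraseIdx j')) < ℓ (π τ) := by
      have := cs.length_wordProd_le (τ.eraseIdx j')
      have h3 := List.length_eraseIdx_add_one hj'
      rw [hτred]
      omega
    have step1 : cxStep cs (π (τ.eraseIdx j')) (π τ) := by
      refine ⟨π (τ.eraseIdx j') * ((ris τ).getD j' 1) * (π (τ.eraseIdx j'))⁻¹,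
        hrrefl.conj _, ?_, hlen1⟩
      rw [h2]; group
    have step2 : cxStep cs (π τ) v := by
      refine ⟨σ i, cs.isReflection_simple i, by rw [hvτ, cs.wordProd_cons], ?_⟩
      rw [← hτ]
      omega
    rw [hsu]
    exact (Relation.ReflTransGen.single step1).tail step2

theorem single_mono {u v : W} (i : B) (hs : cxStep cs u v) (ha : ℓ v < ℓ (σ i * v)) :
    cxStep cs (σ i * u) (σ i * v) := by
  obtain ⟨t, ht, hv, hlen⟩ := hs
  refine ⟨σ i * t * (σ i)⁻¹, ht.conj (σ i), by rw [hv]; group, ?_⟩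
  have h1 : ℓ (σ i * u) ≤ ℓ u + 1 := by
    rcases cs.length_simple_mul u i with h | h <;> omega
  omega

theorem lift_mono : ∀ n, ∀ v : W, ℓ v ≤ n → ∀ u, cxLE cs u v → ∀ i : B,
    (ℓ (σ i * v) < ℓ v → cxLE cs (σ i * u) v) ∧
    (ℓ v < ℓ (σ i * v) → cxLE cs (σ i * u) (σ i * v)) := by
  intro n
  induction n with
  | zero =>
    intro v hv u hu i
    rcases hu.cases_tail with heq | ⟨v', _, hstep⟩
    · subst heq
      constructor
      · intro hd
        refine Relation.ReflTransGen.single ⟨σ i, cs.isReflection_simple i, ?_, hd⟩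
        rw [cs.simple_mul_simple_cancel_left]
      · intro _
        exact Relation.ReflTransGen.refl
    · obtain ⟨t, _, _, hlt⟩ := hstep
      omega
  | succ n ih =>
    intro v hv u hu i
    rcases hu.cases_tail with heq | ⟨v', huv', hstep⟩
    · subst heq
      constructor
      · intro hd
        refine Relation.ReflTransGen.single ⟨σ i, cs.isReflection_simple i, ?_, hd⟩
        rw [cs.simple_mul_simple_cancel_left]
      · intro _
        exact Relation.ReflTransGen.refl
    · have hlv' : ℓ v' ≤ n := by
        obtain ⟨t, _, _, hlt⟩ := hstep
        omega
      obtain ⟨ihd, iha⟩ := ih v' hlv' u huv' i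
      constructor
      · intro hd
        rcases lt_trichotomy (ℓ (σ i * v')) (ℓ v') with h | h | h
        · exact (ihd h).tail hstep
        · exact absurd h (cs.length_simple_mul_ne v' i)
        · exact (iha h).trans (single_lift cs i hstep hd)
      · intro ha
        rcases lt_trichotomy (ℓ (σ i * v')) (ℓ v') with h | h | h
        · exact ((ihd h).tail hstep).tail ⟨σ i, cs.isReflection_simple i, rfl, ha⟩
        · exact absurd h (cs.length_simple_mul_ne v' i)
        · exact (iha h).tail (single_mono cs i hstep ha)

theorem cx_lift {u v : W} (i : B) (h : cxLE cs u v) (hd : ℓ (σ i * v) < ℓ v) :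
    cxLE cs (σ i * u) v :=
  (lift_mono cs (ℓ v) v le_rfl u h i).1 hd

theorem cx_mono {u v : W} (i : B) (h : cxLE cs u v) (ha : ℓ v < ℓ (σ i * v)) :
    cxLE cs (σ i * u) (σ i * v) :=
  (lift_mono cs (ℓ v) v le_rfl u h i).2 ha

theorem sublist_cxLE {ω' ω : List B} (h : ω' <+ ω) (hred : cs.IsReduced ω) :
    cxLE cs (π ω') (π ω) := by
  induction h with
  | slnil => exact Relation.ReflTransGen.refl
  | @cons l₁ l₂ a h ih =>
    have hred2 : cs.IsReduced l₂ := by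
      have := hred.drop 1
      simpa using this
    have hlen : ℓ (π l₂) < ℓ (π (a :: l₂)) := by
      rw [hred, hred2, List.length_cons]
      omega
    exact (ih hred2).tail ⟨σ a, cs.isReflection_simple a, cs.wordProd_cons a l₂, hlen⟩
  | @cons_cons l₁ l₂ a h ih =>
    have hred2 : cs.IsReduced l₂ := by
      have := hred.drop 1
      simpa using this
    have ha : ℓ (π l₂) < ℓ (σ a * π l₂) := by
      rw [← cs.wordProd_cons, hred, hred2, List.length_cons]
      omega
    have := cx_mono cs a (ih hred2) ha
    rwa [cs.wordProd_cons, cs.wordProd_cons]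

theorem cxLE_sublist : ∀ n, ∀ ω : List B, ω.length ≤ n → ∀ u, cxLE cs u (π ω) →
    ∃ ω', ω' <+ ω ∧ π ω' = u := by
  intro n
  induction n with
  | zero =>
    intro ω hlen u hu
    rcases hu.cases_tail with heq | ⟨v, _, hstep⟩
    · exact ⟨ω, List.Sublist.refl ω, heq⟩
    · obtain ⟨t, ht, hv, hlt⟩ := hstep
      have := cs.length_wordProd_le ω
      omega
  | succ n ih =>
    intro ω hlen u hu
    rcases hu.cases_tail with heq | ⟨v, huv, hstep⟩
    · exact ⟨ω, List.Sublist.refl ω, heq⟩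
    · obtain ⟨t, ht, hv, hlt⟩ := hstep
      have hltω : ℓ (t * π ω) < ℓ (π ω) := by
        have he : t * π ω = v := by rw [hv, ← mul_assoc, ht.mul_self, one_mul]
        rw [he]
        exact hlt
      obtain ⟨j, hj, hex⟩ := strong_exchange cs ω ht hltω
      have hv2 : v = π (ω.eraseIdx j) := by
        rw [← hex, hv, ← mul_assoc, ht.mul_self, one_mul]
      have hlen2 : (ω.eraseIdx j).length ≤ n := by
        have := List.length_eraseIdx_add_one hj
        omega
      obtain ⟨ω', hsub, hπ⟩ := ih (ω.eraseIdx j) hlen2 u (hv2 ▸ huv)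
      exact ⟨ω', hsub.trans (List.eraseIdx_sublist ω j), hπ⟩


end DemAux

/-- The Bruhat order on a Coxeter group, via the subword property: `x ≤ y` iff some
reduced word for `y` has a subword whose product is `x`. -/
def CoxeterSystem.bruhatLE {B W : Type*} [Group W] {M : CoxeterMatrix B}
    (cs : CoxeterSystem M W) (x y : W) : Prop :=
  ∃ ω ω' : List B, cs.IsReduced ω ∧ cs.wordProd ω = y ∧
    List.Sublist ω' ω ∧ cs.wordProd ω' = x

/-- The set of products `u * v` with `u ≤ x` and `v ≤ y` in the Bruhat order. -/
def CoxeterSystem.prodSet {B W : Type*} [Group W] {M : CoxeterMatrix B}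
    (cs : CoxeterSystem M W) (x y : W) : Set W :=
  {w | ∃ u v : W, cs.bruhatLE u x ∧ cs.bruhatLE v y ∧ w = u * v}

namespace DemAux

variable {B W : Type*} [Group W] {M : CoxeterMatrix B} (cs : CoxeterSystem M W)

local prefix:100 "σ" => cs.simple
local prefix:100 "π" => cs.wordProd
local prefix:100 "ℓ" => cs.length

theorem bruhatLE_iff_cxLE {u w : W} : cs.bruhatLE u w ↔ cxLE cs u w := by
  constructor
  · rintro ⟨ω, ω', hred, rfl, hsub, rfl⟩
    exact sublist_cxLE cs hsub hred
  · intro h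
    obtain ⟨ω, hred, hw⟩ := cs.exists_reduced_word' w
    obtain ⟨ω', hsub, hπ⟩ := cxLE_sublist cs ω.length ω le_rfl u (by rwa [← hw])
    exact ⟨ω, ω', hred, hw.symm, hsub, hπ⟩

theorem bruhatLE_antisymm {u w : W} (h : cs.bruhatLE u w) (h' : cs.bruhatLE w u) : u = w :=
  cxLE_antisymm cs ((bruhatLE_iff_cxLE cs).mp h) ((bruhatLE_iff_cxLE cs).mp h')

section Demazure

variable (star : W → W → W)

/-- Iterated Demazure product over a word. -/
def SP (l : List B) (y : W) : W := l.foldr (fun i w => star (cs.simple i) w) y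

theorem SP_reduced_one
    (hstar_simple : ∀ (i : B) (w : W), star (cs.simple i) w =
      if cs.length w < cs.length (cs.simple i * w) then cs.simple i * w else w) :
    ∀ {τ : List B}, cs.IsReduced τ → SP cs star τ 1 = π τ := by
  intro τ
  induction τ with
  | nil => intro _; simp [SP]
  | cons c τ ih =>
    intro hred
    have hred2 : cs.IsReduced τ := by
      have := hred.drop 1
      simpa using this
    show star (σ c) (SP cs star τ 1) = _
    rw [ih hred2, hstar_simple, cs.wordProd_cons, if_pos]
    rw [← cs.wordProd_cons, hred, hred2, List.length_cons]
    omega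

theorem SP_reduced
    (hstar_one : ∀ w : W, star 1 w = w)
    (hstar_simple : ∀ (i : B) (w : W), star (cs.simple i) w =
      if cs.length w < cs.length (cs.simple i * w) then cs.simple i * w else w)
    (hstar_assoc : ∀ a b c : W, star (star a b) c = star a (star b c))
    (y : W) : ∀ {ρ : List B}, cs.IsReduced ρ → SP cs star ρ y = star (π ρ) y := by
  intro ρ
  induction ρ with
  | nil =>
    intro _
    show y = star (π List.nil) y
    rw [cs.wordProd_nil, hstar_one]
  | cons c ρ ih =>
    intro hred
    have hred2 : cs.IsReduced ρ := by
      have := hred.drop 1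
      simpa using this
    show star (σ c) (SP cs star ρ y) = _
    rw [ih hred2, ← hstar_assoc, cs.wordProd_cons]
    congr 1
    rw [hstar_simple, if_pos]
    rw [← cs.wordProd_cons, hred, hred2, List.length_cons]
    omega

theorem dem_main
    (hstar_one : ∀ w : W, star 1 w = w)
    (hstar_simple : ∀ (i : B) (w : W), star (cs.simple i) w =
      if cs.length w < cs.length (cs.simple i * w) then cs.simple i * w else w)
    (hstar_assoc : ∀ a b c : W, star (star a b) c = star a (star b c)) :
    ∀ l : List B, ∃ σl : List B, σl <+ l ∧ cs.IsReduced σl ∧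
    π σl = SP cs star l 1 ∧ ∀ l' : List B, l' <+ l → ∃ s', s' <+ σl ∧ π s' = π l' := by
  intro l
  induction l with
  | nil =>
    refine ⟨[], List.Sublist.refl _, by simp [CoxeterSystem.IsReduced], by simp [SP], ?_⟩
    intro l' hl'
    rw [List.sublist_nil] at hl'
    exact ⟨[], by simp [hl']⟩
  | cons i l ih =>
    obtain ⟨σl, hsub, hred, hπ, hsubw⟩ := ih
    have hSP : SP cs star (i :: l) 1
        = if ℓ (SP cs star l 1) < ℓ (σ i * SP cs star l 1) then σ i * SP cs star l 1
          else SP cs star l 1 := by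
      show star (σ i) (SP cs star l 1) = _
      rw [hstar_simple]
    rcases lt_trichotomy (ℓ (SP cs star l 1)) (ℓ (σ i * SP cs star l 1)) with hc | hc | hc
    · refine ⟨i :: σl, hsub.cons₂ i, ?_, ?_, ?_⟩
      · rw [CoxeterSystem.IsReduced, cs.wordProd_cons, hπ, List.length_cons, ← hred, hπ]
        rcases cs.length_simple_mul (SP cs star l 1) i with h | h <;> omega
      · rw [hSP, if_pos hc, cs.wordProd_cons, hπ]
      · intro l' hl'
        cases hl' with
        | cons _ h =>
          obtain ⟨s', hs, hp⟩ := hsubw l' h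
          exact ⟨s', hs.cons i, hp⟩
        | cons_cons _ h =>
          obtain ⟨s', hs, hp⟩ := hsubw _ h
          exact ⟨i :: s', hs.cons₂ i, by rw [cs.wordProd_cons, cs.wordProd_cons, hp]⟩
    · exact absurd hc.symm (cs.length_simple_mul_ne (SP cs star l 1) i)
    · refine ⟨σl, hsub.cons i, hred, ?_, ?_⟩
      · rw [hSP, if_neg (by omega), hπ]
      · intro l' hl'
        cases hl' with
        | cons _ h => exact hsubw l' h
        | cons_cons _ h =>
          obtain ⟨s', hs, hp⟩ := hsubw _ h
          have h1 : cxLE cs (π s') (π σl) := sublist_cxLE cs hs hred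
          have h2 : cxLE cs (σ i * π s') (π σl) := by
            refine cx_lift cs i h1 ?_
            rw [hπ]
            exact hc
          obtain ⟨s'', hs2, hp2⟩ := cxLE_sublist cs σl.length σl le_rfl _ h2
          exact ⟨s'', hs2, by rw [hp2, cs.wordProd_cons, hp]⟩

end Demazure

end DemAux

/-- The Demazure product `x ∗ y` is the unique maximal element (in Bruhat order) of the set
`{u * v : u ≤ x, v ≤ y}`. -/
theorem demazure_eq_unique_max_of_prodSet {B W : Type*} [Group W] {M : CoxeterMatrix B} (cs : CoxeterSystem M W)
    (star : W → W → W)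
    (hstar_one : ∀ w : W, star 1 w = w)
    (hstar_simple : ∀ (i : B) (w : W), star (cs.simple i) w =
      if cs.length w < cs.length (cs.simple i * w) then cs.simple i * w else w)
    (hstar_assoc : ∀ a b c : W, star (star a b) c = star a (star b c))
    (x y : W) :
    (star x y ∈ cs.prodSet x y ∧
      ∀ z ∈ cs.prodSet x y, cs.bruhatLE (star x y) z → z = star x y) ∧
    ∀ z ∈ cs.prodSet x y, (∀ z' ∈ cs.prodSet x y, cs.bruhatLE z z' → z' = z) →
      z = star x y := by
  obtain ⟨ω, hωred, hωx⟩ := cs.exists_reduced_word' x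
  obtain ⟨τ, hτred, hτy⟩ := cs.exists_reduced_word' y
  have hA1 : star x y = DemAux.SP cs star (ω ++ τ) 1 := by
    show _ = (ω ++ τ).foldr _ 1
    rw [List.foldr_append]
    have h0 : τ.foldr (fun i w => star (cs.simple i) w) 1 = cs.wordProd τ :=
      DemAux.SP_reduced_one cs star hstar_simple hτred
    rw [h0]
    have h1 : ω.foldr (fun i w => star (cs.simple i) w) (cs.wordProd τ)
        = star (cs.wordProd ω) (cs.wordProd τ) :=
      DemAux.SP_reduced cs star hstar_one hstar_simple hstar_assoc (cs.wordProd τ) hωred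
    rw [h1, ← hωx, ← hτy]
  obtain ⟨σl, hσsub, hσred, hσπ, hσsubw⟩ :=
    DemAux.dem_main cs star hstar_one hstar_simple hstar_assoc (ω ++ τ)
  rw [← hA1] at hσπ
  -- membership
  have hmem : star x y ∈ cs.prodSet x y := by
    obtain ⟨l₁, l₂, hdecomp, h1, h2⟩ := List.sublist_append_iff.mp hσsub
    refine ⟨cs.wordProd l₁, cs.wordProd l₂, ⟨ω, l₁, hωred, hωx.symm, h1, rfl⟩,
      ⟨τ, l₂, hτred, hτy.symm, h2, rfl⟩, ?_⟩
    rw [← hσπ, hdecomp, cs.wordProd_append]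
  -- maximality
  have hle : ∀ z ∈ cs.prodSet x y, cs.bruhatLE z (star x y) := by
    rintro z ⟨u, v, hu, hv, rfl⟩
    have hcu : DemAux.cxLE cs u x := (DemAux.bruhatLE_iff_cxLE cs).mp hu
    have hcv : DemAux.cxLE cs v y := (DemAux.bruhatLE_iff_cxLE cs).mp hv
    obtain ⟨a, ha, hpa⟩ := DemAux.cxLE_sublist cs ω.length ω le_rfl u (by rwa [← hωx])
    obtain ⟨b, hb, hpb⟩ := DemAux.cxLE_sublist cs τ.length τ le_rfl v (by rwa [← hτy])
    obtain ⟨s', hs', hp'⟩ := hσsubw (a ++ b) (ha.append hb)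
    exact ⟨σl, s', hσred, hσπ, hs', by rw [hp', cs.wordProd_append, hpa, hpb]⟩
  refine ⟨⟨hmem, fun z hz hle' => DemAux.bruhatLE_antisymm cs (hle z hz) hle'⟩, ?_⟩
  intro z hz hmax
  exact (hmax (star x y) hmem (hle z hz)).symm
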